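/- arXiv:2303.06131 — 5 statements merged into one kernel-verified Lean document; each statement's English description precedes it below -/
import Mathlib

section
/- Let φ be a continuous flow on a compact metric space M and Λ a closed invariant set with the shadowing property. If x ∈ Λ is chain-recurrent for the flow restricted to Λ, then for every ε > 0 there exist z ∈ Λ with d(z, x) ≤ ε, an increasing homeomorphism h of ℝ fixing 0, and arbitrarily large times t with d(φ(h(t), z), x) ≤ ε. -/
open Set Filter Metric

variable {M : Type*} [MetricSpace M]

/-- A continuous flow on `M`. -/
def IsFlow (φ : ℝ → M → M) : Prop :=
  Continuous (fun p : ℝ × M => φ p.1 p.2) ∧ (∀ x, φ 0 x = x) ∧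
    ∀ s t : ℝ, ∀ x, φ (s + t) x = φ s (φ t x)

/-- A fixed point (singularity) of the flow. -/
def IsFixed (φ : ℝ → M → M) (x : M) : Prop := ∀ t, φ t x = x

/-- An invariant set. -/
def Invariant (φ : ℝ → M → M) (Λ : Set M) : Prop := ∀ t : ℝ, ∀ x ∈ Λ, φ t x ∈ Λ

/-- A reparametrization: an increasing homeomorphism of `ℝ` fixing `0`. -/
def IsRep (h : ℝ → ℝ) : Prop :=
  StrictMono h ∧ Continuous h ∧ Function.Surjective h ∧ h 0 = 0

/-- A (bi-infinite) `δ`-`T`-pseudo-orbit. -/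
def IsPseudoOrbit (φ : ℝ → M → M) (δ T : ℝ) (x : ℤ → M) (t : ℤ → ℝ) : Prop :=
  ∀ i : ℤ, T ≤ t i ∧ dist (φ (t i) (x i)) (x (i + 1)) ≤ δ

/-- The partial sums `s` associated with the times `t` of a pseudo-orbit. -/
def PartialSums (t s : ℤ → ℝ) : Prop := s 0 = 0 ∧ ∀ i : ℤ, s (i + 1) = s i + t i

/-- `y` ε-shadows the pseudo-orbit `(x, t)` (with partial sums `s`) via `h`. -/
def ShadowsWith (φ : ℝ → M → M) (ε : ℝ) (x : ℤ → M) (s : ℤ → ℝ) (y : M) (h : ℝ → ℝ) : Prop :=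
  ∀ i : ℤ, ∀ τ ∈ Set.Ico (s i) (s (i + 1)), dist (φ (h τ) y) (φ (τ - s i) (x i)) ≤ ε

/-- The shadowing property on `Λ`. -/
def ShadowingOn (φ : ℝ → M → M) (Λ : Set M) : Prop :=
  ∀ ε > (0 : ℝ), ∃ δ > (0 : ℝ), ∀ (x : ℤ → M) (t s : ℤ → ℝ),
    (∀ i, x i ∈ Λ) → IsPseudoOrbit φ δ 1 x t → PartialSums t s →
    ∃ y ∈ Λ, ∃ h : ℝ → ℝ, IsRep h ∧ ShadowsWith φ ε x s y h

/-- `p` is chain-recurrent in `Λ`: finite ε-1-pseudo-orbits from `p` back to `p`. -/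
def ChainRecurrentPt (φ : ℝ → M → M) (Λ : Set M) (p : M) : Prop :=
  ∀ ε > (0 : ℝ), ∃ N : ℕ, 0 < N ∧ ∃ (x : ℕ → M) (t : ℕ → ℝ),
    x 0 = p ∧ x N = p ∧ (∀ i ≤ N, x i ∈ Λ) ∧
    ∀ i < N, 1 ≤ t i ∧ dist (φ (t i) (x i)) (x (i + 1)) ≤ ε

def ChainRecurrentSet (φ : ℝ → M → M) (Λ : Set M) : Prop :=
  ∀ p ∈ Λ, ChainRecurrentPt φ Λ p

/-- `p` is non-wandering for the flow restricted to `Λ`. -/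
def NonWanderingPt (φ : ℝ → M → M) (Λ : Set M) (p : M) : Prop :=
  ∀ ε > (0 : ℝ), ∀ T > (0 : ℝ), ∃ y ∈ Λ, dist y p ≤ ε ∧ ∃ t > T, dist (φ t y) p ≤ ε

/-- The stable set of a point `σ`. -/
def Ws (φ : ℝ → M → M) (σ : M) : Set M :=
  {x | Tendsto (fun t => φ t x) atTop (nhds σ)}

/-- The unstable set of a point `σ`. -/
def Wu (φ : ℝ → M → M) (σ : M) : Set M :=
  {x | Tendsto (fun t => φ t x) atBot (nhds σ)}

/-- The orbit of a point. -/
def orbitOf (φ : ℝ → M → M) (p : M) : Set M := Set.range fun t => φ t p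

/-- A homoclinic point attached to the singularity `σ`. -/
def HomoclinicPt (φ : ℝ → M → M) (σ p : M) : Prop :=
  ¬ IsFixed φ p ∧ p ∈ Ws φ σ ∩ Wu φ σ

/-- `σ` is attached to `Λ`: accumulated by regular (non-fixed) points of `Λ`. -/
def Attached (φ : ℝ → M → M) (Λ : Set M) (σ : M) : Prop :=
  ∀ ε > (0 : ℝ), ∃ p ∈ Λ, dist p σ ≤ ε ∧ ¬ IsFixed φ p

/-- if `Λ` has the shadowing property and `x ∈ Λ` is chain-recurrent,
then for every `ε > 0` there are `z ∈ Λ` with `dist z x ≤ ε`, a reparametrization `h`,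
and arbitrarily large times `t` with `dist (φ (h t) z) x ≤ ε`. -/
theorem stmt_1 {M : Type*} [MetricSpace M] [CompactSpace M] (φ : ℝ → M → M)
    (hφ : IsFlow φ) (Λ : Set M) (hclosed : IsClosed Λ) (hinv : Invariant φ Λ)
    (hshad : ShadowingOn φ Λ) (x : M) (hx : x ∈ Λ) (hcr : ChainRecurrentPt φ Λ x) :
    ∀ ε > (0 : ℝ), ∃ z ∈ Λ, dist z x ≤ ε ∧ ∃ h : ℝ → ℝ, IsRep h ∧
      ∀ T > (0 : ℝ), ∃ t > T, dist (φ (h t) z) x ≤ ε := by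
  intro ε hε
  obtain ⟨δ, hδ, hδprop⟩ := hshad ε hε
  obtain ⟨N, hN, xf, tf, hx0, hxN, hmemf, hstep⟩ := hcr δ hδ
  set Nz : ℤ := (N : ℤ) with hNz
  have hNz0 : 0 < Nz := by rw [hNz]; exact_mod_cast hN
  -- index reduction
  have hjlt : ∀ i : ℤ, (i % Nz).toNat < N := by
    intro i
    have h1 : i % Nz < Nz := Int.emod_lt_of_pos i hNz0
    have h2 : 0 ≤ i % Nz := Int.emod_nonneg i (by omega)
    omega
  set xt : ℤ → M := fun i => xf ((i % Nz).toNat) with hxt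
  set tt : ℤ → ℝ := fun i => tf ((i % Nz).toNat) with htt
  -- successor index
  have hsucc : ∀ i : ℤ, xt (i + 1) = xf ((i % Nz).toNat + 1) := by
    intro i
    have h2 : 0 ≤ i % Nz := Int.emod_nonneg i (by omega)
    have hkey : (i + 1) % Nz = (i % Nz + 1) % Nz := by
      conv_rhs => rw [Int.add_emod, Int.emod_emod_of_dvd i dvd_rfl, ← Int.add_emod]
    by_cases hcase : i % Nz + 1 < Nz
    · have : (i + 1) % Nz = i % Nz + 1 := by
        rw [hkey, Int.emod_eq_of_lt (by omega) hcase]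
      simp only [hxt, this]
      congr 1
      omega
    · have h3 : i % Nz + 1 = Nz := by
        have := hjlt i; omega
      have : (i + 1) % Nz = 0 := by
        rw [hkey, h3, Int.emod_self]
      simp only [hxt, this]
      have : ((i % Nz).toNat + 1) = N := by omega
      rw [this, hxN]
      simpa using hx0
  have hpo : IsPseudoOrbit φ δ 1 xt tt := by
    intro i
    obtain ⟨h1, h2⟩ := hstep ((i % Nz).toNat) (hjlt i)
    exact ⟨h1, by rw [hsucc i]; exact h2⟩
  have hmem : ∀ i, xt i ∈ Λ := fun i => hmemf _ (le_of_lt (hjlt i))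
  -- partial sums
  set s : ℤ → ℝ := fun i =>
      (∑ j ∈ Finset.range i.toNat, tt j) - ∑ j ∈ Finset.range (-i).toNat, tt (-(j : ℤ) - 1)
    with hs
  have hps : PartialSums tt s := by
    constructor
    · simp [hs]
    · intro i
      rcases le_or_gt 0 i with hi | hi
      · have h1 : (i + 1).toNat = i.toNat + 1 := by omega
        have h2 : (-(i + 1)).toNat = 0 := by omega
        have h3 : (-i).toNat = 0 := by omega
        have h4 : (i.toNat : ℤ) = i := by omega
        simp only [hs, h1, h2, h3, Finset.sum_range_succ, Finset.range_zero,
          Finset.sum_empty, h4]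
        ring
      · have h1 : (i + 1).toNat = 0 := by omega
        have h2 : i.toNat = 0 := by omega
        have h3 : (-i).toNat = (-(i + 1)).toNat + 1 := by omega
        have h4 : -(((-(i + 1)).toNat : ℤ)) - 1 = i := by omega
        simp only [hs, h1, h2, h3, Finset.sum_range_succ, Finset.range_zero,
          Finset.sum_empty, h4]
        ring
  -- growth of s on naturals
  have hgrow : ∀ m : ℕ, (m : ℝ) ≤ s (m : ℤ) := by
    intro m
    induction m with
    | zero => simp [hps.1]
    | succ n ih =>
      have := hps.2 (n : ℤ)
      push_cast
      rw [this]
      have := (hpo (n : ℤ)).1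
      linarith
  obtain ⟨y, hyΛ, h, hrep, hsh⟩ := hδprop xt tt s hmem hpo hps
  have hφ0 : ∀ w : M, φ 0 w = w := hφ.2.1
  have hx00 : xt 0 = x := by
    simp only [hxt]
    simpa using hx0
  refine ⟨y, hyΛ, ?_, h, hrep, ?_⟩
  · -- dist y x ≤ ε  from shadowing at τ = 0
    have h01 : (0 : ℝ) ∈ Set.Ico (s 0) (s (0 + 1)) := by
      rw [hps.1, hps.2 0, hps.1]
      refine ⟨le_refl _, ?_⟩
      have := (hpo 0).1
      linarith
    have := hsh 0 0 h01
    rw [hrep.2.2.2, hφ0, hps.1, sub_zero, hφ0, hx00] at this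
    exact this
  · intro T hT
    obtain ⟨k, hk⟩ := exists_nat_gt T
    refine ⟨s ((k : ℤ) * Nz), ?_, ?_⟩
    · -- s (k*N) ≥ k*N ≥ k > T
      have h1 : ((k * N : ℕ) : ℝ) ≤ s ((k * N : ℕ) : ℤ) := hgrow (k * N)
      have h2 : ((k : ℤ) * Nz) = ((k * N : ℕ) : ℤ) := by push_cast; ring
      rw [h2]
      have h3 : (k : ℝ) ≤ ((k * N : ℕ) : ℝ) := by
        exact_mod_cast Nat.le_mul_of_pos_right k hN
      linarith
    · set m : ℤ := (k : ℤ) * Nz with hm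
      have hmod : m % Nz = 0 := Int.mul_emod_left _ _
      have hxtm : xt m = x := by
        simp only [hxt, hmod]
        simpa using hx0
      have hmem2 : s m ∈ Set.Ico (s m) (s (m + 1)) := by
        rw [hps.2 m]
        refine ⟨le_refl _, ?_⟩
        have := (hpo m).1
        linarith
      have := hsh m (s m) hmem2
      rw [sub_self, hφ0, hxtm] at this
      exact this
end

section
/- Let φ be a continuous flow on a compact metric space M. If a periodic pseudo-orbit (obtained by infinitely concatenating a finite δ-1-pseudo-orbit from x to x) is ε-shadowed by a point z via a reparametrization h (an increasing homeomorphism of ℝ with h(0)=0), then x is non-wandering: for every T > 0 there is t > T with both d(z, x) ≤ ε and d(φ(h(t), z), x) ≤ ε. -/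
open Set Filter Metric

variable {M : Type*} [MetricSpace M]

/-- a shadowed periodic pseudo-orbit through `p` makes `p`
non-wandering: for every `T > 0` there is `t > T` with `dist z p ≤ ε` and
`dist (φ (h t) z) p ≤ ε`. -/
theorem stmt_2 {M : Type*} [MetricSpace M] [CompactSpace M] (φ : ℝ → M → M)
    (hφ : IsFlow φ) (δ ε : ℝ) (hδ : 0 < δ) (hε : 0 < ε) (p : M)
    (x : ℤ → M) (t s : ℤ → ℝ) (k : ℤ) (hk : 0 < k)
    (hx0 : x 0 = p)
    (hper : ∀ i : ℤ, x (i + k) = x i ∧ t (i + k) = t i)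
    (hpo : IsPseudoOrbit φ δ 1 x t) (hs : PartialSums t s)
    (z : M) (h : ℝ → ℝ) (hrep : IsRep h) (hshadow : ShadowsWith φ ε x s z h) :
    ∀ T > (0 : ℝ), ∃ τ > T, dist z p ≤ ε ∧ dist (φ (h τ) z) p ≤ ε := by
  obtain ⟨hmono, hcont, hsurj, h0⟩ := hrep
  obtain ⟨hs0, hsrec⟩ := hs
  have hzp : dist z p ≤ ε := by
    have h01 : (0:ℝ) ∈ Set.Ico (s 0) (s (0+1)) := by
      constructor
      · exact hs0.le
      · rw [hsrec, hs0, zero_add]; linarith [(hpo 0).1]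
    have := hshadow 0 0 h01
    simpa [h0, hs0, hφ.2.1, hx0] using this
  intro T hT
  have hxk : ∀ n : ℕ, x ((n : ℤ) * k) = x 0 := by
    intro n
    induction n with
    | zero => simp
    | succ n ih =>
      have he : ((n+1 : ℕ) : ℤ) * k = (n : ℤ) * k + k := by push_cast; ring
      rw [he, (hper _).1, ih]
  have hsm : ∀ m : ℕ, (m : ℝ) ≤ s m := by
    intro m
    induction m with
    | zero => simp [hs0]
    | succ m ih =>
      have h1 := (hpo m).1
      have he : ((m+1 : ℕ) : ℤ) = (m : ℤ) + 1 := by push_cast; ring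
      rw [he, hsrec]
      push_cast
      linarith
  set n : ℕ := ⌈T⌉₊ + 1 with hn
  have hnT : T < (n : ℝ) := lt_of_le_of_lt (Nat.le_ceil T)
    (by exact_mod_cast Nat.lt_succ_self _)
  set m : ℤ := (n : ℤ) * k with hm
  have hm0 : (0:ℤ) ≤ m := by positivity
  have hmn : (n : ℤ) ≤ m := le_mul_of_one_le_right (by positivity) hk
  have hmnat : ((m.toNat : ℤ)) = m := Int.toNat_of_nonneg hm0
  have hsmge : (m : ℝ) ≤ s m := by
    have := hsm m.toNat
    rw [hmnat] at this
    calc (m : ℝ) = ((m.toNat : ℤ) : ℝ) := by rw [hmnat]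
    _ = (m.toNat : ℝ) := by push_cast; ring
    _ ≤ s m := this
  have hTsm : T < s m := by
    have : (n : ℝ) ≤ (m : ℝ) := by exact_mod_cast hmn
    linarith
  refine ⟨s m, hTsm, hzp, ?_⟩
  have hmem : s m ∈ Set.Ico (s m) (s (m+1)) := by
    constructor
    · exact le_refl _
    · rw [hsrec]; linarith [(hpo m).1]
  have := hshadow m (s m) hmem
  have hxm : x m = p := by rw [hm, hxk, hx0]
  simpa [hxm, hφ.2.1] using this
end

section
/- Let φ be a continuous flow on a compact metric space M, let σ be a fixed point of φ, and suppose there is a neighborhood V of σ such that every point of V other than σ leaves V in positive or negative time (σ is dynamically isolated in V) and σ is the only fixed point in V. Assume Λ is a closed invariant non-wandering set containing σ, that σ is attached to Λ (accumulated by non-fixed points of Λ), and that the flow has the shadowing property on Λ. Further assume that every point z ∈ V whose forward orbit stays in V forever converges-to-stay near σ (i.e., belongs to the local stable set W^s_loc(σ)) and symmetrically for backward orbits (W^u_loc(σ)). Then there exists a non-fixed point z ∈ Λ with z ∈ W^s(σ) ∩ W^u(σ), i.e., a homoclinic loop attached to σ. -/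
open Set Filter Metric

variable {M : Type*} [MetricSpace M]

lemma flow_comp {M : Type*} [MetricSpace M] {φ : ℝ → M → M} (hφ : IsFlow φ)
    (s t : ℝ) (x : M) : φ s (φ t x) = φ (s + t) x := (hφ.2.2 s t x).symm

lemma ws_shift {M : Type*} [MetricSpace M] {φ : ℝ → M → M} (hφ : IsFlow φ) {σ z : M}
    (c : ℝ) (h : φ c z ∈ Ws φ σ) : z ∈ Ws φ σ := by
  have key : ∀ τ : ℝ, φ (τ - c) (φ c z) = φ τ z := by
    intro τ; rw [flow_comp hφ]; congr 1; ring
  have h2 : Tendsto (fun τ : ℝ => φ (τ - c) (φ c z)) atTop (nhds σ) :=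
    h.comp (by simpa [sub_eq_add_neg] using
      tendsto_atTop_add_const_right atTop (-c) (tendsto_id (α := ℝ)))
  exact h2.congr key

lemma wu_shift {M : Type*} [MetricSpace M] {φ : ℝ → M → M} (hφ : IsFlow φ) {σ z : M}
    (c : ℝ) (h : φ c z ∈ Wu φ σ) : z ∈ Wu φ σ := by
  have key : ∀ τ : ℝ, φ (τ - c) (φ c z) = φ τ z := by
    intro τ; rw [flow_comp hφ]; congr 1; ring
  have h2 : Tendsto (fun τ : ℝ => φ (τ - c) (φ c z)) atBot (nhds σ) :=
    h.comp (by simpa [sub_eq_add_neg] using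
      tendsto_atBot_add_const_right atBot (-c) (tendsto_id (α := ℝ)))
  exact h2.congr key

/-- a non-wandering closed invariant set with the shadowing property,
containing an attached, dynamically isolated fixed point `σ` (whose local stable and
unstable sets in the isolating neighborhood consist of points converging to `σ`),
contains a homoclinic loop attached to `σ`. -/
theorem stmt_4 {M : Type*} [MetricSpace M] [CompactSpace M] (φ : ℝ → M → M)
    (hφ : IsFlow φ) (Λ : Set M) (hclosed : IsClosed Λ) (hinv : Invariant φ Λ)
    (hnw : ∀ p ∈ Λ, NonWanderingPt φ Λ p) (hshad : ShadowingOn φ Λ)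
    (σ : M) (hσΛ : σ ∈ Λ) (hσfix : IsFixed φ σ) (hatt : Attached φ Λ σ)
    (V : Set M) (hV : V ∈ nhds σ)
    (hiso : ∀ z ∈ V, z ≠ σ → ∃ t : ℝ, φ t z ∉ V)
    (huniq : ∀ z ∈ V, IsFixed φ z → z = σ)
    (hWsloc : ∀ z ∈ V, (∀ t : ℝ, 0 ≤ t → φ t z ∈ V) → z ∈ Ws φ σ)
    (hWuloc : ∀ z ∈ V, (∀ t : ℝ, t ≤ 0 → φ t z ∈ V) → z ∈ Wu φ σ) :
    ∃ z ∈ Λ, HomoclinicPt φ σ z := by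
  have hcont := hφ.1
  have hzero := hφ.2.1
  have hadd := hφ.2.2
  -- a closed ball around σ inside V
  obtain ⟨r0, hr0, hball⟩ := Metric.mem_nhds_iff.mp hV
  set r := r0 / 2 with hrdef
  have hr : 0 < r := by positivity
  have hrV : closedBall σ r ⊆ V :=
    (closedBall_subset_ball (by simp [hrdef]; linarith)).trans hball
  -- shadowing constant for ε = r/4
  obtain ⟨δ0, hδ0, hδprop⟩ := hshad (r / 4) (by positivity)
  set δ := min δ0 (r / 4) with hδdef
  have hδpos : 0 < δ := lt_min hδ0 (by positivity)
  have hδle : δ ≤ δ0 := min_le_left _ _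
  have hδr : δ ≤ r / 4 := min_le_right _ _
  -- regular point p near σ
  obtain ⟨p, hpΛ, hpσ, hpreg⟩ := hatt (δ / 4) (by positivity)
  have hpV : p ∈ V := hrV (mem_closedBall.mpr (by linarith))
  by_cases hall : ∀ s : ℝ, φ s p ∈ V
  · exact ⟨p, hpΛ, hpreg,
      hWsloc p hpV (fun t _ => hall t), hWuloc p hpV (fun t _ => hall t)⟩
  push_neg at hall
  obtain ⟨a, haV⟩ := hall
  have ha0 : a ≠ 0 := by
    rintro rfl; exact haV (by rw [hzero]; exact hpV)
  have hafar : r < dist (φ a p) σ := by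
    by_contra h; push_neg at h; exact haV (hrV (mem_closedBall.mpr h))
  -- continuity of w ↦ φ a w at p
  have hca : Continuous fun w => φ a w :=
    hcont.comp (continuous_const.prodMk continuous_id)
  obtain ⟨δ', hδ', hδ'prop⟩ := Metric.continuous_iff.mp hca p (r / 4) (by positivity)
  set η := min (δ / 4) (δ' / 2) with hηdef
  have hη : 0 < η := lt_min (by positivity) (by positivity)
  have hηδ : η ≤ δ / 4 := min_le_left _ _
  have hηδ' : η < δ' := lt_of_le_of_lt (min_le_right _ _) (by linarith)
  -- nonwandering return near p
  obtain ⟨y, hyΛ, hyp, t, htT, hty⟩ :=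
    hnw p hpΛ η hη (max 1 (|a| + 1)) (lt_of_lt_of_le one_pos (le_max_left _ _))
  have ht1 : 1 ≤ t := le_of_lt (lt_of_le_of_lt (le_max_left _ _) htT)
  have hta : |a| + 1 < t := lt_of_le_of_lt (le_max_right _ _) htT
  -- the pseudo-orbit
  set X : ℤ → M := fun i => if i = 0 then y else σ with hX
  set tt : ℤ → ℝ := fun i => if i = 0 then t else 1 with httdef
  set S : ℤ → ℝ := fun i => if i ≤ 0 then (i : ℝ) else t + ((i : ℝ) - 1) with hSdef
  have hyσ : dist y σ ≤ δ0 := by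
    have := dist_triangle y p σ
    have : dist y σ ≤ η + δ / 4 := by linarith [this, hyp, hpσ]
    linarith [hηδ, hδle, hδpos]
  have htyσ : dist (φ t y) σ ≤ δ0 := by
    have := dist_triangle (φ t y) p σ
    have : dist (φ t y) σ ≤ η + δ / 4 := by linarith [this, hty, hpσ]
    linarith [hηδ, hδle, hδpos]
  have hXΛ : ∀ i, X i ∈ Λ := by
    intro i; by_cases h : i = 0 <;> simp [hX, h, hyΛ, hσΛ]
  have hpo : IsPseudoOrbit φ δ0 1 X tt := by
    intro i
    constructor
    · by_cases h : i = 0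
      · simpa [httdef, h] using ht1
      · simp [httdef, h]
    · by_cases h : i = 0
      · subst h
        simpa [hX, httdef] using htyσ
      · by_cases h' : i = -1
        · subst h'
          have : φ 1 σ = σ := hσfix 1
          simpa [hX, httdef, this, dist_comm] using hyσ
        · have h'' : i + 1 ≠ 0 := by omega
          simp [hX, httdef, h, h'', hσfix 1, hδ0.le]
  have hps : PartialSums tt S := by
    constructor
    · simp [hSdef]
    · intro i
      rcases lt_trichotomy i 0 with h | h | h
      · have h1 : i + 1 ≤ 0 := by omega
        have h2 : i ≤ 0 := by omega
        have h3 : i ≠ 0 := by omega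
        simp only [hSdef, httdef, if_pos h1, if_pos h2, if_neg h3]
        push_cast; ring
      · subst h
        norm_num [hSdef, httdef]
      · have h1 : ¬ i + 1 ≤ 0 := by omega
        have h2 : ¬ i ≤ 0 := by omega
        have h3 : i ≠ 0 := by omega
        simp only [hSdef, httdef, if_neg h1, if_neg h2, if_neg h3]
        push_cast; ring
  obtain ⟨z, hzΛ, h, ⟨hmono, hhcont, hsurj, hh0⟩, hshadz⟩ := hδprop X tt S hXΛ hpo hps
  -- coverage: the orbit of z stays near σ for negative times and times ≥ h t
  have hneg : ∀ u < (0 : ℝ), dist (φ u z) σ ≤ r / 4 := by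
    intro u hu
    obtain ⟨τ, hτ⟩ := hsurj u
    have hτ0 : τ < 0 := by
      by_contra h'
      push_neg at h'
      have := hmono.monotone h'
      rw [hh0, hτ] at this
      linarith
    have hi0 : ⌊τ⌋ < 0 := Int.floor_lt.mpr (by exact_mod_cast hτ0)
    have h1 : S ⌊τ⌋ = (⌊τ⌋ : ℝ) := by simp [hSdef, hi0.le]
    have h2 : S (⌊τ⌋ + 1) = (⌊τ⌋ : ℝ) + 1 := by
      have : ⌊τ⌋ + 1 ≤ 0 := by omega
      simp [hSdef, this]
    have hmem : τ ∈ Set.Ico (S ⌊τ⌋) (S (⌊τ⌋ + 1)) := by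
      rw [h1, h2]; exact ⟨Int.floor_le τ, Int.lt_floor_add_one τ⟩
    have hsh := hshadz ⌊τ⌋ τ hmem
    have hX' : X ⌊τ⌋ = σ := by simp [hX, hi0.ne]
    rw [hX', hσfix, hτ] at hsh
    exact hsh
  have hpos2 : ∀ u, h t ≤ u → dist (φ u z) σ ≤ r / 4 := by
    intro u hu
    obtain ⟨τ, hτ⟩ := hsurj u
    have hτt : t ≤ τ := by
      by_contra h'
      push_neg at h'
      have := hmono h'
      rw [hτ] at this
      linarith
    have hfl : (0 : ℤ) ≤ ⌊τ - t⌋ := Int.floor_nonneg.mpr (by linarith)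
    set i : ℤ := ⌊τ - t⌋ + 1 with hidef
    have hi1 : 1 ≤ i := by omega
    have h1 : S i = t + (⌊τ - t⌋ : ℝ) := by
      have : ¬ i ≤ 0 := by omega
      simp only [hSdef, if_neg this, hidef, if_neg (show ¬ ⌊τ - t⌋ + 1 ≤ 0 by omega)]
      push_cast; ring
    have h2 : S (i + 1) = t + (⌊τ - t⌋ : ℝ) + 1 := by
      have : ¬ i + 1 ≤ 0 := by omega
      simp only [hSdef, if_neg this, hidef, if_neg (show ¬ ⌊τ - t⌋ + 1 + 1 ≤ 0 by omega)]
      push_cast; ring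
    have hmem : τ ∈ Set.Ico (S i) (S (i + 1)) := by
      rw [h1, h2]
      constructor
      · linarith [Int.floor_le (τ - t)]
      · linarith [Int.lt_floor_add_one (τ - t)]
    have hsh := hshadz i τ hmem
    have hX' : X i = σ := by
      have : i ≠ 0 := by omega
      simp [hX, this]
    rw [hX', hσfix, hτ] at hsh
    exact hsh
  -- z ∈ Wu
  have hWu_z : z ∈ Wu φ σ := by
    refine wu_shift hφ (-1) ?_
    have hin : ∀ τ : ℝ, τ ≤ 0 → φ τ (φ (-1) z) ∈ V := by
      intro τ hτ
      rw [flow_comp hφ]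
      exact hrV (mem_closedBall.mpr (le_trans (hneg _ (by linarith)) (by linarith)))
    exact hWuloc _ (by simpa [hzero] using hin 0 le_rfl) hin
  -- z ∈ Ws
  have hWs_z : z ∈ Ws φ σ := by
    refine ws_shift hφ (h t) ?_
    have hin : ∀ τ : ℝ, 0 ≤ τ → φ τ (φ (h t) z) ∈ V := by
      intro τ hτ
      rw [flow_comp hφ]
      exact hrV (mem_closedBall.mpr (le_trans (hpos2 _ (by linarith)) (by linarith)))
    exact hWsloc _ (by simpa [hzero] using hin 0 le_rfl) hin
  -- z is not fixed
  have hzreg : ¬ IsFixed φ z := by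
    intro hfz
    have hz1 : dist z σ ≤ r / 4 := by
      have hlt : h (-1) < 0 := by
        have := hmono (show (-1 : ℝ) < 0 by norm_num)
        rwa [hh0] at this
      have := hneg (h (-1)) hlt
      rwa [hfz (h (-1))] at this
    have hzσ : z = σ :=
      huniq z (hrV (mem_closedBall.mpr (by linarith))) hfz
    have hS0 : S 0 = 0 := by simp [hSdef]
    have hS1 : S 1 = t := by norm_num [hSdef]
    have hX0 : X 0 = y := by simp [hX]
    rcases lt_or_gt_of_ne ha0 with hlt | hgt
    · -- a < 0 : use τ = t + a
      have habs : |a| = -a := abs_of_neg hlt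
      have hmem : t + a ∈ Set.Ico (S 0) (S 1) := by
        rw [hS0, hS1]
        constructor
        · rw [habs] at hta; linarith
        · linarith
      have hsh := hshadz 0 (t + a) hmem
      rw [hX0, hS0, hzσ, hσfix] at hsh
      have heq : φ (t + a - 0) y = φ a (φ t y) := by
        rw [flow_comp hφ]; congr 1; ring
      rw [heq] at hsh
      have hd2 : dist (φ a (φ t y)) (φ a p) < r / 4 :=
        hδ'prop _ (lt_of_le_of_lt hty hηδ')
      have htr := dist_triangle (φ a p) (φ a (φ t y)) σ
      rw [dist_comm (φ a p) (φ a (φ t y))] at htr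
      linarith [dist_comm σ (φ a (φ t y))]
    · -- a > 0 : use τ = a
      have habs : |a| = a := abs_of_pos hgt
      have hmem : a ∈ Set.Ico (S 0) (S 1) := by
        rw [hS0, hS1]
        exact ⟨hgt.le, by rw [habs] at hta; linarith⟩
      have hsh := hshadz 0 a hmem
      rw [hX0, hS0, hzσ, hσfix, sub_zero] at hsh
      have hd2 : dist (φ a y) (φ a p) < r / 4 :=
        hδ'prop _ (lt_of_le_of_lt hyp hηδ')
      have htr := dist_triangle (φ a p) (φ a y) σ
      rw [dist_comm (φ a p) (φ a y)] at htr
      linarith [dist_comm σ (φ a y)]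
  exact ⟨z, hzΛ, hzreg, hWs_z, hWu_z⟩
end

section
/- Let X be a complete C¹ vector field on a Riemannian manifold M and let Λ be an R-chain-recurrent closed invariant set. If X has the rescaled-shadowing property on Λ, then Λ is non-wandering for the restricted flow. -/
open Set Filter Metric

variable {M : Type*} [MetricSpace M]

/-- `e ∈ C⁰_X(M)`: continuous, nonnegative, vanishing exactly on the singularities. -/
def CXfun {M : Type*} [MetricSpace M] (φ : ℝ → M → M) (e : M → ℝ) : Prop :=
  Continuous e ∧ ∀ x, 0 ≤ e x ∧ (e x = 0 ↔ IsFixed φ x)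

/-- A (bi-infinite) `e`-`T`-pseudo-orbit: jumps bounded by `e (x i)`. -/
def IsRescaledPseudoOrbit {M : Type*} [MetricSpace M] (φ : ℝ → M → M) (e : M → ℝ)
    (T : ℝ) (x : ℤ → M) (t : ℤ → ℝ) : Prop :=
  ∀ i : ℤ, T ≤ t i ∧ dist (φ (t i) (x i)) (x (i + 1)) ≤ e (x i)

/-- `y` `e`-shadows the pseudo-orbit `(x, t)` (with partial sums `s`) via `h`. -/
def RescaledShadowsWith {M : Type*} [MetricSpace M] (φ : ℝ → M → M) (e : M → ℝ)
    (x : ℤ → M) (s : ℤ → ℝ) (y : M) (h : ℝ → ℝ) : Prop :=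
  ∀ i : ℤ, ∀ τ ∈ Set.Ico (s i) (s (i + 1)),
    dist (φ (h τ) y) (φ (τ - s i) (x i)) ≤ e (φ (τ - s i) (x i))

/-- The rescaled-shadowing property on `Λ`. -/
def RescaledShadowingOn {M : Type*} [MetricSpace M] (φ : ℝ → M → M) (Λ : Set M) : Prop :=
  ∀ e : M → ℝ, CXfun φ e → ∃ d : M → ℝ, CXfun φ d ∧
    ∀ (x : ℤ → M) (t s : ℤ → ℝ), (∀ i, x i ∈ Λ) →
      IsRescaledPseudoOrbit φ d 1 x t → PartialSums t s →
      ∃ y ∈ Λ, ∃ h : ℝ → ℝ, IsRep h ∧ RescaledShadowsWith φ e x s y h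

/-- `Λ` is R-chain-recurrent: every point admits finite `e`-`1`-pseudo-orbits from
itself to itself, for every `e ∈ C⁰_X(M)`. -/
def RChainRecurrentSet {M : Type*} [MetricSpace M] (φ : ℝ → M → M) (Λ : Set M) : Prop :=
  ∀ p ∈ Λ, ∀ e : M → ℝ, CXfun φ e → ∃ N : ℕ, 0 < N ∧ ∃ (x : ℕ → M) (t : ℕ → ℝ),
    x 0 = p ∧ x N = p ∧ (∀ i ≤ N, x i ∈ Λ) ∧
    ∀ i < N, 1 ≤ t i ∧ dist (φ (t i) (x i)) (x (i + 1)) ≤ e (x i)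

/-- partial sums of a bi-infinite sequence -/
noncomputable def psum (t : ℤ → ℝ) : ℤ → ℝ
  | Int.ofNat n => ∑ j ∈ Finset.range n, t j
  | Int.negSucc n => -∑ j ∈ Finset.range (n+1), t (Int.negSucc j)

lemma psum_zero (t : ℤ → ℝ) : psum t 0 = 0 := by
  show psum t (Int.ofNat 0) = 0
  simp [psum]

lemma psum_succ (t : ℤ → ℝ) (i : ℤ) : psum t (i + 1) = psum t i + t i := by
  cases i with
  | ofNat n =>
      show psum t (Int.ofNat (n+1)) = psum t (Int.ofNat n) + t (Int.ofNat n)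
      simp [psum, Finset.sum_range_succ]
  | negSucc n =>
      cases n with
      | zero =>
          show psum t (Int.ofNat 0) = psum t (Int.negSucc 0) + t (Int.negSucc 0)
          simp [psum]
      | succ m =>
          show psum t (Int.negSucc m) = psum t (Int.negSucc (m+1)) + t (Int.negSucc (m+1))
          simp [psum, Finset.sum_range_succ]

lemma psum_nat_ge (t : ℤ → ℝ) (ht : ∀ i, 1 ≤ t i) (n : ℕ) : (n : ℝ) ≤ psum t n := by
  show (n : ℝ) ≤ psum t (Int.ofNat n)
  have : psum t (Int.ofNat n) = ∑ j ∈ Finset.range n, t j := rfl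
  rw [this]
  calc (n : ℝ) = ∑ _j ∈ Finset.range n, (1:ℝ) := by simp
  _ ≤ _ := Finset.sum_le_sum fun j _ => ht j

lemma fixed_of_two_periods {M : Type*} [MetricSpace M] (φ : ℝ → M → M) (hφ : IsFlow φ)
    (z : M) (h1 : φ 1 z = z) (h2 : φ (Real.sqrt 2) z = z) : IsFixed φ z := by
  obtain ⟨hc, h0, hadd⟩ := hφ
  set S : AddSubgroup ℝ :=
    { carrier := {t | φ t z = z}
      zero_mem' := h0 z
      add_mem' := fun {a b} ha hb => by
        simp only [Set.mem_setOf_eq] at *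
        rw [hadd, hb, ha]
      neg_mem' := fun {a} ha => by
        simp only [Set.mem_setOf_eq] at *
        have := hadd (-a) a z
        rw [neg_add_cancel, h0, ha] at this
        exact this.symm } with hS
  have hcz : Continuous (fun t : ℝ => φ t z) :=
    hc.comp (continuous_id.prodMk continuous_const)
  have hSclosed : IsClosed (S : Set ℝ) := by
    have : (S : Set ℝ) = (fun t : ℝ => φ t z) ⁻¹' {z} := rfl
    rw [this]
    exact IsClosed.preimage hcz isClosed_singleton
  have h1S : (1:ℝ) ∈ S := h1
  have h2S : Real.sqrt 2 ∈ S := h2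
  rcases AddSubgroup.dense_or_cyclic S with hd | ⟨a, ha⟩
  · intro τ
    have : (S : Set ℝ) = Set.univ := by
      rw [← hSclosed.closure_eq, hd.closure_eq]
    have : τ ∈ (S : Set ℝ) := this ▸ Set.mem_univ τ
    exact this
  · exfalso
    rw [ha, AddSubgroup.mem_closure_singleton] at h1S h2S
    obtain ⟨m, hm⟩ := h1S
    obtain ⟨n, hn⟩ := h2S
    rw [zsmul_eq_mul] at hm hn
    have hmne : (m : ℝ) ≠ 0 := by
      intro h
      rw [h, zero_mul] at hm
      exact one_ne_zero hm.symm
    have hane : a ≠ 0 := by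
      intro h
      rw [h, mul_zero] at hm
      exact one_ne_zero hm.symm
    have key : Real.sqrt 2 * (m : ℝ) = (n : ℝ) := by
      calc Real.sqrt 2 * (m:ℝ) = (n:ℝ) * a * (m:ℝ) := by rw [hn]
      _ = (n:ℝ) * ((m:ℝ) * a) := by ring
      _ = (n:ℝ) := by rw [hm, mul_one]
    have hsq : Real.sqrt 2 = (n : ℝ) / (m : ℝ) := by
      rw [eq_div_iff hmne]; exact key
    exact irrational_sqrt_two ⟨(n : ℚ) / (m : ℚ), by push_cast [hsq]; ring⟩

lemma succ_index_aux {M : Type*} (N : ℕ) (hN : 0 < N) (i : ℤ) (x : ℕ → M) (hx : x N = x 0) :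
    x (((i + 1) % (N:ℤ)).toNat) = x ((i % (N:ℤ)).toNat + 1) := by
  have hNz : (N:ℤ) ≠ 0 := by exact_mod_cast hN.ne'
  have h1 : (0:ℤ) ≤ i % N := Int.emod_nonneg i hNz
  have h2 : i % (N:ℤ) < N := Int.emod_lt_of_pos i (by exact_mod_cast hN)
  have key : (i + 1) % (N:ℤ) = (i % N + 1) % N := by
    conv_lhs => rw [← Int.emod_add_mul_ediv i N]
    have : i % (N:ℤ) + (N:ℤ) * (i / N) + 1 = i % N + 1 + (N:ℤ) * (i / N) := by ring
    rw [this, Int.add_mul_emod_self_left]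
  by_cases hc : i % (N:ℤ) + 1 = N
  · rw [key, hc, Int.emod_self]
    have : (i % (N:ℤ)).toNat + 1 = N := by omega
    rw [this, hx]
    simp
  · have hlt : i % (N:ℤ) + 1 < N := lt_of_le_of_ne (by omega) hc
    rw [key, Int.emod_eq_of_lt (by omega) hlt]
    congr 1
    omega

/-- Lemma 5.4: an R-chain-recurrent closed invariant set with the
rescaled-shadowing property is non-wandering. -/
theorem stmt_13 {M : Type*} [MetricSpace M] (φ : ℝ → M → M)
    (hφ : IsFlow φ) (Λ : Set M) (hclosed : IsClosed Λ) (hinv : Invariant φ Λ)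
    (hcr : RChainRecurrentSet φ Λ) (hshad : RescaledShadowingOn φ Λ) :
    ∀ p ∈ Λ, NonWanderingPt φ Λ p := by
  intro p hp ε hε T hT
  obtain ⟨hc, h0, hadd⟩ := id hφ
  -- the test function e
  set e : M → ℝ := fun z => min ε (dist (φ 1 z) z + dist (φ (Real.sqrt 2) z) z) with he_def
  have hφ1 : Continuous (fun z : M => φ 1 z) := hc.comp (continuous_const.prodMk continuous_id)
  have hφ2 : Continuous (fun z : M => φ (Real.sqrt 2) z) :=
    hc.comp (continuous_const.prodMk continuous_id)
  have he : CXfun φ e := by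
    refine ⟨continuous_const.min ((hφ1.dist continuous_id).add (hφ2.dist continuous_id)), ?_⟩
    intro z
    refine ⟨le_min hε.le (by positivity), ?_⟩
    constructor
    · intro hz
      have hsum : dist (φ 1 z) z + dist (φ (Real.sqrt 2) z) z = 0 := by
        rcases min_eq_iff.mp hz with h | h
        · linarith [hε, h.1.symm]
        · exact h.1
      have d1 : dist (φ 1 z) z = 0 := by
        have := dist_nonneg (x := φ (Real.sqrt 2) z) (y := z)
        have := dist_nonneg (x := φ 1 z) (y := z)
        linarith
      have d2 : dist (φ (Real.sqrt 2) z) z = 0 := by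
        have := dist_nonneg (x := φ 1 z) (y := z)
        linarith
      exact fixed_of_two_periods φ ⟨hc, h0, hadd⟩ z (dist_eq_zero.mp d1) (dist_eq_zero.mp d2)
    · intro hz
      have e1 : φ 1 z = z := hz 1
      have e2 : φ (Real.sqrt 2) z = z := hz (Real.sqrt 2)
      simp [he_def, e1, e2, min_eq_right hε.le]
  have hele : ∀ z, e z ≤ ε := fun z => min_le_left _ _
  obtain ⟨d, hd, HS⟩ := hshad e he
  obtain ⟨N, hN, x, t, hx0, hxN, hxΛ, hstep⟩ := hcr p hp d hd
  have hxNx0 : x N = x 0 := by rw [hxN, hx0]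
  -- the periodic bi-infinite pseudo-orbit
  set X : ℤ → M := fun i => x ((i % (N:ℤ)).toNat) with hX
  set Tt : ℤ → ℝ := fun i => t ((i % (N:ℤ)).toNat) with hTt
  have hNz : (N:ℤ) ≠ 0 := by exact_mod_cast hN.ne'
  have hmlt : ∀ i : ℤ, ((i % (N:ℤ)).toNat) < N := by
    intro i
    have h1 : (0:ℤ) ≤ i % N := Int.emod_nonneg i hNz
    have h2 : i % (N:ℤ) < N := Int.emod_lt_of_pos i (by exact_mod_cast hN)
    omega
  have hXmem : ∀ i, X i ∈ Λ := fun i => hxΛ _ (hmlt i).le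
  have hTt1 : ∀ i, 1 ≤ Tt i := fun i => (hstep _ (hmlt i)).1
  have hpseudo : IsRescaledPseudoOrbit φ d 1 X Tt := by
    intro i
    refine ⟨hTt1 i, ?_⟩
    have hXsucc : X (i + 1) = x ((i % (N:ℤ)).toNat + 1) :=
      succ_index_aux N hN i x hxNx0
    rw [hXsucc]
    exact (hstep _ (hmlt i)).2
  set s : ℤ → ℝ := psum Tt with hs
  have hps : PartialSums Tt s := ⟨psum_zero Tt, psum_succ Tt⟩
  obtain ⟨y, hyΛ, h, ⟨hmono, hcont, hsurj, hh0⟩, hshadow⟩ := HS X Tt s hXmem hpseudo hps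
  have hslt : ∀ i : ℤ, s i < s (i + 1) := by
    intro i
    rw [hps.2 i]
    linarith [hTt1 i]
  have hX0 : X 0 = p := by
    show x ((0 % (N:ℤ)).toNat) = p
    simp [hx0]
  -- y is close to p
  have hyp : dist y p ≤ ε := by
    have := hshadow 0 0 ⟨le_of_eq hps.1.symm, hps.1 ▸ hslt 0⟩
    simp only [hps.1, sub_zero, hh0, h0, hX0] at this
    exact this.trans (hele p)
  -- find the return time
  obtain ⟨u, hu⟩ := hsurj (T + 1)
  set k : ℕ := ⌈u⌉₊ + 1 with hk
  have hku : (u : ℝ) ≤ (k * N : ℕ) := by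
    have h1 : u ≤ (⌈u⌉₊ : ℝ) := Nat.le_ceil u
    have h2 : k ≤ k * N := Nat.le_mul_of_pos_right k hN
    have : (k : ℝ) ≤ (k * N : ℕ) := by exact_mod_cast h2
    have : (⌈u⌉₊ : ℝ) ≤ (k : ℝ) := by exact_mod_cast Nat.le_succ _
    push_cast at *
    nlinarith [Nat.le_ceil u]
  have hXkN : X ((k * N : ℕ) : ℤ) = p := by
    show x (((((k * N : ℕ) : ℤ)) % (N:ℤ)).toNat) = p
    have : (((k * N : ℕ) : ℤ)) % (N:ℤ) = 0 := by
      push_cast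
      exact Int.mul_emod_left _ _
    rw [this]
    simp [hx0]
  have hskN : ((k * N : ℕ) : ℝ) ≤ s ((k * N : ℕ) : ℤ) := psum_nat_ge Tt hTt1 (k * N)
  set τ : ℝ := s ((k * N : ℕ) : ℤ) with hτ
  have hτu : u ≤ τ := le_trans hku hskN
  have hret : dist (φ (h τ) y) p ≤ ε := by
    have := hshadow ((k * N : ℕ) : ℤ) τ ⟨le_refl τ, hslt _⟩
    simp only [← hτ, sub_self, h0, hXkN] at this
    exact this.trans (hele p)
  refine ⟨y, hyΛ, hyp, h τ, ?_, hret⟩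
  have : T + 1 ≤ h τ := by
    rw [← hu]
    exact hmono.monotone hτu
  linarith
end

section
/- Let L_t = exp(tA) be a hyperbolic linear flow on E = E^s ⊕ E^u (both factors nontrivial), with ‖L_t|_{E^s}‖ ≤ C e^{−λt} and ‖L_{−t}|_{E^u}‖ ≤ C e^{−λt} for t ≥ 0. Let v_n = v_n^s + v_n^u be a sequence with v_n^s, v_n^u ≠ 0, ‖v_n^s‖ = ‖v_n^u‖, and v_n → 0. Fix r > 0 and let u_n = inf{t > 0 : ‖(L_t v_n)^u‖ = r} and w_n = inf{t > 0 : ‖(L_{−t} v_n)^s‖ = r} (exit times from the box {‖w^s‖, ‖w^u‖ ≤ r}, assuming the norms of components are monotone along orbits). Then u_n → ∞, w_n → ∞, dist(L_{u_n} v_n, E^u) → 0, and dist(L_{−w_n} v_n, E^s) → 0. -/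
open Filter

lemma exit_aux {Eu : Type*}
    [NormedAddCommGroup Eu] [NormedSpace ℝ Eu] [FiniteDimensional ℝ Eu]
    (Lu : ℝ → Eu →ₗ[ℝ] Eu)
    (hLu0 : Lu 0 = LinearMap.id) (hLuadd : ∀ a b : ℝ, Lu (a + b) = (Lu a).comp (Lu b))
    (hLucont : ∀ v : Eu, Continuous fun t : ℝ => Lu t v)
    (C lam : ℝ) (hC : 1 ≤ C) (hlam : 0 < lam)
    (hexpand : ∀ t : ℝ, 0 ≤ t → ∀ v : Eu, ‖Lu (-t) v‖ ≤ C * Real.exp (-lam * t) * ‖v‖)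
    (hmono : ∀ v : Eu, v ≠ 0 → StrictMono fun t : ℝ => ‖Lu t v‖)
    (r : ℝ) (hr : 0 < r)
    (vu : ℕ → Eu) (hvu : ∀ n, vu n ≠ 0)
    (hlim : Tendsto (fun n => ‖vu n‖) atTop (nhds 0))
    (u : ℕ → ℝ) (hu : ∀ n, u n = sInf {t : ℝ | 0 < t ∧ ‖Lu t (vu n)‖ = r}) :
    Tendsto u atTop atTop := by
  -- inverse identity
  have hinv : ∀ (t : ℝ) (v : Eu), Lu (-t) (Lu t v) = v := by
    intro t v
    have h := hLuadd (-t) t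
    rw [neg_add_cancel, hLu0] at h
    have := congrArg (fun f : Eu →ₗ[ℝ] Eu => f v) h
    simpa using this.symm
  -- lower bound on growth
  have hlow : ∀ (t : ℝ), 0 ≤ t → ∀ v : Eu, ‖v‖ ≤ C * Real.exp (-lam * t) * ‖Lu t v‖ := by
    intro t ht v
    have := hexpand t ht (Lu t v)
    rwa [hinv] at this
  -- existence of an exit time
  have hexists : ∀ v : Eu, v ≠ 0 → ‖v‖ < r → ∃ t, 0 < t ∧ ‖Lu t v‖ = r := by
    intro v hv hvr
    have hv0 : 0 < ‖v‖ := norm_pos_iff.mpr hv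
    set T : ℝ := Real.log (C * r / ‖v‖) / lam with hT
    have hratio : 1 < C * r / ‖v‖ := by
      rw [lt_div_iff₀ hv0]
      nlinarith
    have hT0 : 0 < T := div_pos (Real.log_pos hratio) hlam
    have hfT : r ≤ ‖Lu T v‖ := by
      have h1 := hlow T hT0.le v
      have hexp : Real.exp (-lam * T) = ‖v‖ / (C * r) := by
        rw [hT]
        rw [show -lam * (Real.log (C * r / ‖v‖) / lam) = -Real.log (C * r / ‖v‖) by
          field_simp]
        rw [Real.exp_neg, Real.exp_log (by positivity)]
        field_simp
      rw [hexp] at h1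
      have hC0 : (0:ℝ) < C := lt_of_lt_of_le one_pos hC
      rw [show C * (‖v‖ / (C * r)) * ‖Lu T v‖ = ‖v‖ * ‖Lu T v‖ / r by
        field_simp] at h1
      rw [le_div_iff₀ hr] at h1
      nlinarith [norm_nonneg (Lu T v)]
    have hcont : ContinuousOn (fun t => ‖Lu t v‖) (Set.Icc 0 T) :=
      ((hLucont v).norm).continuousOn
    have hivt := intermediate_value_Icc hT0.le hcont
    have hmem : r ∈ Set.Icc (‖Lu 0 v‖) (‖Lu T v‖) := by
      constructor
      · rw [hLu0]; simpa using hvr.le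
      · exact hfT
    obtain ⟨t, ht, hft⟩ := hivt hmem
    refine ⟨t, ?_, hft⟩
    rcases ht.1.lt_or_eq with h | h
    · exact h
    · exfalso
      rw [← h] at hft
      have hvr' : ‖v‖ = r := by simpa [hLu0] using hft
      rw [hvr'] at hvr
      exact lt_irrefl r hvr
  rw [tendsto_atTop]
  intro b
  set T : ℝ := max b 0 with hTdef
  have hvec : Tendsto vu atTop (nhds 0) := by
    rw [tendsto_zero_iff_norm_tendsto_zero]; exact hlim
  have h1 : ∀ᶠ n in atTop, ‖Lu T (vu n)‖ < r := by
    have ht : Tendsto (fun n => ‖Lu T (vu n)‖) atTop (nhds 0) := by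
      have hc : Continuous (Lu T) := (Lu T).continuous_of_finiteDimensional
      have := (hc.tendsto 0).comp hvec
      simpa using this.norm
    exact ht.eventually_lt_const hr
  have h2 : ∀ᶠ n in atTop, ‖vu n‖ < r := hlim.eventually_lt_const hr
  filter_upwards [h1, h2] with n hn1 hn2
  rw [hu n]
  have hne : ∃ t, t ∈ {t : ℝ | 0 < t ∧ ‖Lu t (vu n)‖ = r} :=
    hexists (vu n) (hvu n) hn2
  have hsub : ∀ t ∈ {t : ℝ | 0 < t ∧ ‖Lu t (vu n)‖ = r}, T ≤ t := by
    rintro t ⟨htpos, htr⟩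
    by_contra hlt
    push_neg at hlt
    have := ((hmono (vu n) (hvu n)).monotone) hlt.le
    simp only at this
    rw [htr] at this
    linarith
  calc b ≤ T := le_max_left b 0
    _ ≤ sInf {t : ℝ | 0 < t ∧ ‖Lu t (vu n)‖ = r} := le_csInf hne hsub

/-- linear model of Lemma 5.5: for a hyperbolic linear flow on
`E = E^s ⊕ E^u` (modelled by its restrictions `Ls`, `Lu` to the factors, with monotone
component norms along orbits), a sequence `v_n = v_n^s + v_n^u` on the diagonal cone
`‖v_n^s‖ = ‖v_n^u‖` tending to `0` has forward exit times `u_n` and backward exit times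
`w_n` from the box of radius `r` tending to `∞`, and the exit points approach `E^u`
forward and `E^s` backward (i.e. the complementary components tend to `0`). -/
theorem stmt_16 {Es Eu : Type*}
    [NormedAddCommGroup Es] [NormedSpace ℝ Es] [FiniteDimensional ℝ Es]
    [NormedAddCommGroup Eu] [NormedSpace ℝ Eu] [FiniteDimensional ℝ Eu]
    [Nontrivial Es] [Nontrivial Eu]
    (Ls : ℝ → Es →ₗ[ℝ] Es) (Lu : ℝ → Eu →ₗ[ℝ] Eu)
    (hLs0 : Ls 0 = LinearMap.id) (hLsadd : ∀ a b : ℝ, Ls (a + b) = (Ls a).comp (Ls b))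
    (hLu0 : Lu 0 = LinearMap.id) (hLuadd : ∀ a b : ℝ, Lu (a + b) = (Lu a).comp (Lu b))
    (hLscont : ∀ v : Es, Continuous fun t : ℝ => Ls t v)
    (hLucont : ∀ v : Eu, Continuous fun t : ℝ => Lu t v)
    (C lam : ℝ) (hC : 0 < C) (hlam : 0 < lam)
    (hcontract : ∀ t : ℝ, 0 ≤ t → ∀ v : Es, ‖Ls t v‖ ≤ C * Real.exp (-lam * t) * ‖v‖)
    (hexpand : ∀ t : ℝ, 0 ≤ t → ∀ v : Eu, ‖Lu (-t) v‖ ≤ C * Real.exp (-lam * t) * ‖v‖)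
    (hmono_s : ∀ v : Es, v ≠ 0 → StrictAnti fun t : ℝ => ‖Ls t v‖)
    (hmono_u : ∀ v : Eu, v ≠ 0 → StrictMono fun t : ℝ => ‖Lu t v‖)
    (r : ℝ) (hr : 0 < r)
    (vs : ℕ → Es) (vu : ℕ → Eu)
    (hvs : ∀ n, vs n ≠ 0) (hvu : ∀ n, vu n ≠ 0)
    (hdiag : ∀ n, ‖vs n‖ = ‖vu n‖)
    (hlim : Tendsto (fun n => ‖vs n‖) atTop (nhds 0))
    (u w : ℕ → ℝ)
    (hu : ∀ n, u n = sInf {t : ℝ | 0 < t ∧ ‖Lu t (vu n)‖ = r})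
    (hw : ∀ n, w n = sInf {t : ℝ | 0 < t ∧ ‖Ls (-t) (vs n)‖ = r}) :
    Tendsto u atTop atTop ∧ Tendsto w atTop atTop ∧
    Tendsto (fun n => ‖Ls (u n) (vs n)‖) atTop (nhds 0) ∧
    Tendsto (fun n => ‖Lu (-(w n)) (vu n)‖) atTop (nhds 0) := by
  -- C ≥ 1
  have hC1 : 1 ≤ C := by
    obtain ⟨v, hv⟩ := exists_ne (0 : Es)
    have h := hcontract 0 le_rfl v
    rw [hLs0] at h
    simp only [LinearMap.id_coe, id_eq, mul_zero, neg_zero, Real.exp_zero, mul_one] at h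
    have hv0 : 0 < ‖v‖ := norm_pos_iff.mpr hv
    nlinarith
  have hlimu : Tendsto (fun n => ‖vu n‖) atTop (nhds 0) := by
    simpa only [hdiag] using hlim
  -- forward exit times
  have hU : Tendsto u atTop atTop :=
    exit_aux Lu hLu0 hLuadd hLucont C lam hC1 hlam hexpand hmono_u r hr vu hvu hlimu u hu
  -- backward exit times, via the reversed stable flow
  have hW : Tendsto w atTop atTop := by
    refine exit_aux (fun t => Ls (-t)) (by simpa using hLs0) ?_ ?_ C lam hC1 hlam ?_ ?_
      r hr vs hvs hlim w ?_
    · intro a b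
      simp only [neg_add, hLsadd]
    · intro v
      exact (hLscont v).comp continuous_neg
    · intro t ht v
      simpa using hcontract t ht v
    · intro v hv a b hab
      exact hmono_s v hv (neg_lt_neg hab)
    · exact hw
  -- nonnegativity of exit times
  have hu0 : ∀ n, 0 ≤ u n := by
    intro n
    rw [hu n]
    exact Real.sInf_nonneg fun x hx => hx.1.le
  have hw0 : ∀ n, 0 ≤ w n := by
    intro n
    rw [hw n]
    exact Real.sInf_nonneg fun x hx => hx.1.le
  have hClim : Tendsto (fun n => C * ‖vs n‖) atTop (nhds 0) := by
    simpa using hlim.const_mul C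
  refine ⟨hU, hW, ?_, ?_⟩
  · refine squeeze_zero (fun n => norm_nonneg _) (fun n => ?_) hClim
    calc ‖Ls (u n) (vs n)‖ ≤ C * Real.exp (-lam * u n) * ‖vs n‖ :=
          hcontract (u n) (hu0 n) (vs n)
      _ ≤ C * 1 * ‖vs n‖ := by
          have : Real.exp (-lam * u n) ≤ 1 := by
            rw [Real.exp_le_one_iff]
            nlinarith [hu0 n]
          gcongr
      _ = C * ‖vs n‖ := by ring
  · refine squeeze_zero (fun n => norm_nonneg _) (fun n => ?_) hClim
    calc ‖Lu (-(w n)) (vu n)‖ ≤ C * Real.exp (-lam * w n) * ‖vu n‖ :=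
          hexpand (w n) (hw0 n) (vu n)
      _ ≤ C * 1 * ‖vu n‖ := by
          have : Real.exp (-lam * w n) ≤ 1 := by
            rw [Real.exp_le_one_iff]
            nlinarith [hw0 n]
          gcongr
      _ = C * ‖vs n‖ := by rw [hdiag n]; ring
end
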